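/- For every real number p ≥ 1, every proper ultrametric space embeds isometrically into ℓ_p, i.e., there exists a map f : X → ℓ_p such that ‖f(x) − f(y)‖_p = ρ(x,y) for all x, y ∈ X. -/

import Mathlib

open ENNReal Metric Set MeasureTheory Function

namespace UltraLpEmbed

variable {X : Type*} [MetricSpace X] [IsUltrametricDist X]

/-- Isoceles principle: if `dist x a < dist x b` then `dist x b ≤ dist a b`. -/
lemma ult_isoceles {x a b : X} (h : dist x a < dist x b) : dist x b ≤ dist a b :=
  (le_max_iff.mp (IsUltrametricDist.dist_triangle_max x a b)).resolve_left (not_le.mpr h)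

lemma ult_finite_band [ProperSpace X] (x : X) (n : ℕ) :
    (Set.range (dist x) ∩ Set.Icc (((n : ℝ) + 1)⁻¹) ((n : ℝ) + 1)).Finite := by
  classical
  set ε : ℝ := ((n : ℝ) + 1)⁻¹ with hεdef
  have hε0 : 0 < ε := by positivity
  by_contra hfin
  have hinf : (Set.range (dist x) ∩ Set.Icc ε ((n : ℝ) + 1)).Infinite := hfin
  obtain ⟨t, htf, hcov⟩ :=
    (totallyBounded_iff.mp (isCompact_closedBall x ((n : ℝ) + 1)).totallyBounded) (ε / 2)
      (by positivity)
  set S := Set.range (dist x) ∩ Set.Icc ε ((n : ℝ) + 1) with hS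
  set y_ : ℝ → X := fun d => if h : ∃ w, dist x w = d then h.choose else x with hy_
  have hy : ∀ d ∈ S, dist x (y_ d) = d := by
    rintro d ⟨⟨w, hw⟩, -⟩
    have h : ∃ w, dist x w = d := ⟨w, hw⟩
    simp only [hy_, dif_pos h]
    exact h.choose_spec
  set c_ : ℝ → X := fun d => if h : ∃ c ∈ t, y_ d ∈ ball c (ε / 2) then h.choose else x with hc_
  have hc : ∀ d ∈ S, c_ d ∈ t ∧ y_ d ∈ ball (c_ d) (ε / 2) := by
    intro d hd
    have hmem : y_ d ∈ closedBall x ((n : ℝ) + 1) := by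
      rw [mem_closedBall, dist_comm, hy d hd]
      exact hd.2.2
    have h2 := hcov hmem
    simp only [Set.mem_iUnion] at h2
    obtain ⟨c, hct, hcb⟩ := h2
    have h : ∃ c ∈ t, y_ d ∈ ball c (ε / 2) := ⟨c, hct, hcb⟩
    simp only [hc_, dif_pos h]
    exact ⟨h.choose_spec.1, h.choose_spec.2⟩
  obtain ⟨d, hd, d', hd', hne, heq⟩ :=
    hinf.exists_ne_map_eq_of_mapsTo (f := c_) (fun d hd => (hc d hd).1) htf
  have hlt : dist (y_ d) (y_ d') < ε := by
    have h1 : dist (y_ d) (c_ d) < ε / 2 := mem_ball.mp (hc d hd).2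
    have h2 : dist (c_ d) (y_ d') < ε / 2 := by
      rw [heq, dist_comm]
      exact mem_ball.mp (hc d' hd').2
    calc dist (y_ d) (y_ d') ≤ dist (y_ d) (c_ d) + dist (c_ d) (y_ d') := dist_triangle _ _ _
      _ < ε / 2 + ε / 2 := add_lt_add h1 h2
      _ = ε := add_halves ε
  have hge : ε ≤ dist (y_ d) (y_ d') := by
    have hdd : dist x (y_ d) ≠ dist x (y_ d') := by
      rw [hy d hd, hy d' hd']; exact hne
    rcases lt_or_gt_of_ne hdd with h | h
    · calc ε ≤ d' := hd'.2.1
        _ = dist x (y_ d') := (hy d' hd').symm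
        _ ≤ dist (y_ d) (y_ d') := ult_isoceles h
    · calc ε ≤ d := hd.2.1
        _ = dist x (y_ d) := (hy d hd).symm
        _ ≤ dist (y_ d') (y_ d) := ult_isoceles h
        _ = dist (y_ d) (y_ d') := dist_comm _ _
  exact absurd hlt (not_lt.mpr hge)

lemma ult_countable_range [ProperSpace X] (x : X) : (Set.range (dist x)).Countable := by
  have hsub : Set.range (dist x) ⊆
      {0} ∪ ⋃ n : ℕ, (Set.range (dist x) ∩ Set.Icc (((n : ℝ) + 1)⁻¹) ((n : ℝ) + 1)) := by
    rintro d ⟨z, rfl⟩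
    rcases eq_or_lt_of_le (dist_nonneg : 0 ≤ dist x z) with h0 | h0
    · exact Or.inl (by simp [← h0])
    · right
      obtain ⟨n₁, hn₁⟩ := exists_nat_ge (dist x z)
      obtain ⟨n₂, hn₂⟩ := exists_nat_ge (dist x z)⁻¹
      have hNpos : (0 : ℝ) < ((n₁ + n₂ : ℕ) : ℝ) + 1 := by positivity
      refine Set.mem_iUnion.mpr ⟨n₁ + n₂, ⟨z, rfl⟩, ?_, ?_⟩
      · have h2 : (dist x z)⁻¹ ≤ ((n₁ + n₂ : ℕ) : ℝ) + 1 := by push_cast; push_cast at hn₂; linarith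
        rw [← inv_inv (dist x z)]
        exact inv_anti₀ (inv_pos.mpr h0) h2
      · push_cast; push_cast at hn₁; linarith
  exact Set.Countable.mono hsub
    ((Set.countable_singleton 0).union
      (Set.countable_iUnion fun n => (ult_finite_band x n).countable))

/-- The set of (p-th powers of) radii at which a set `B` is realized as a closed ball. -/
def Jset (p : ℝ) (B : Set X) : Set ℝ := {s | 0 ≤ s ∧ ∃ z ∈ B, closedBall z (s ^ p⁻¹) = B}

lemma Jset_recenter (p : ℝ) {B : Set X} {s : ℝ} (hs : s ∈ Jset p B) {x : X} (hx : x ∈ B) :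
    closedBall x (s ^ p⁻¹) = B := by
  obtain ⟨-, z, hzB, hz⟩ := hs
  rw [← hz] at hx ⊢
  exact (IsUltrametricDist.closedBall_eq_of_mem hx).symm

lemma Jset_ordConnected {p : ℝ} (hp : 1 ≤ p) (B : Set X) : (Jset p B).OrdConnected := by
  have hppos : (0 : ℝ) < p := lt_of_lt_of_le one_pos hp
  have hpinv : (0 : ℝ) ≤ p⁻¹ := (inv_pos.mpr hppos).le
  constructor
  rintro s₁ h₁ s₃ h₃ s₂ ⟨hs12, hs23⟩
  obtain ⟨hs1, z, hzB, hz⟩ := h₁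
  have hs2 : 0 ≤ s₂ := le_trans hs1 hs12
  refine ⟨hs2, z, hzB, subset_antisymm ?_ ?_⟩
  · rw [← Jset_recenter p h₃ hzB]
    exact closedBall_subset_closedBall (Real.rpow_le_rpow hs2 hs23 hpinv)
  · rw [← hz]
    exact closedBall_subset_closedBall (Real.rpow_le_rpow hs1 hs12 hpinv)

/-- Weight of a ball: the measure of its realization interval. -/
noncomputable def wB (p : ℝ) (B : Set X) : ℝ≥0∞ := volume (Jset p B)

/-- The chain of balls around `x` strictly separating `x` from `y`. -/
def chainSet (p : ℝ) (x y : X) : Set (Set X) :=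
  (fun s => closedBall x (s ^ p⁻¹)) '' (Set.Ico 0 (dist x y ^ p))

lemma chainSet_mem {p : ℝ} (hp : 1 ≤ p) {x y : X} {B : Set X} (hB : B ∈ chainSet p x y) :
    x ∈ B ∧ y ∉ B := by
  have hppos : (0 : ℝ) < p := lt_of_lt_of_le one_pos hp
  obtain ⟨s, ⟨hs0, hslt⟩, rfl⟩ := hB
  refine ⟨mem_closedBall_self (Real.rpow_nonneg hs0 _), fun hy => ?_⟩
  have h1 : dist y x ≤ s ^ p⁻¹ := mem_closedBall.mp hy
  have h2 : s ^ p⁻¹ < dist x y := by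
    calc s ^ p⁻¹ < (dist x y ^ p) ^ p⁻¹ := Real.rpow_lt_rpow hs0 hslt (inv_pos.mpr hppos)
      _ = dist x y := Real.rpow_rpow_inv dist_nonneg hppos.ne'
  rw [dist_comm] at h1
  linarith

lemma mem_chainSet_of {p : ℝ} (hp : 1 ≤ p) {x y : X} {B : Set X} (hx : x ∈ B) (hy : y ∉ B)
    {s : ℝ} (hs : s ∈ Jset p B) : B ∈ chainSet p x y ∧ s ∈ Set.Ico 0 (dist x y ^ p) := by
  have hppos : (0 : ℝ) < p := lt_of_lt_of_le one_pos hp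
  have hB : closedBall x (s ^ p⁻¹) = B := Jset_recenter p hs hx
  have hdy : s ^ p⁻¹ < dist x y := by
    by_contra hc
    push_neg at hc
    exact hy (hB ▸ mem_closedBall.mpr (by rw [dist_comm]; exact hc))
  have hsI : s ∈ Set.Ico 0 (dist x y ^ p) := by
    refine ⟨hs.1, ?_⟩
    have h2 := Real.rpow_lt_rpow (Real.rpow_nonneg hs.1 _) hdy hppos
    rwa [Real.rpow_inv_rpow hs.1 hppos.ne'] at h2
  exact ⟨⟨s, hsI, hB⟩, hsI⟩

lemma chainSet_countable [ProperSpace X] {p : ℝ} (hp : 1 ≤ p) (x y : X) :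
    (chainSet p x y).Countable := by
  have hppos : (0 : ℝ) < p := lt_of_lt_of_le one_pos hp
  apply Set.countable_of_injective_of_countable_image
    (f := fun B : Set X => sSup ((dist x) '' B))
  · -- injectivity on the chain
    have key : ∀ s₁, s₁ ∈ Set.Ico (0:ℝ) (dist x y ^ p) → ∀ s₂, s₂ ∈ Set.Ico (0:ℝ) (dist x y ^ p) →
        s₁ ^ p⁻¹ ≤ s₂ ^ p⁻¹ →
        sSup (dist x '' closedBall x (s₁ ^ p⁻¹)) = sSup (dist x '' closedBall x (s₂ ^ p⁻¹)) →
        closedBall x (s₁ ^ p⁻¹) = closedBall x (s₂ ^ p⁻¹) := by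
      intro s₁ hs₁ s₂ hs₂ hr hψ
      by_contra hne
      have hsub : closedBall x (s₁ ^ p⁻¹) ⊆ closedBall x (s₂ ^ p⁻¹) :=
        closedBall_subset_closedBall hr
      obtain ⟨z, hz2, hz1⟩ := Set.exists_of_ssubset (ssubset_of_subset_of_ne hsub hne)
      have hb1 : sSup (dist x '' closedBall x (s₁ ^ p⁻¹)) ≤ s₁ ^ p⁻¹ := by
        apply csSup_le
        · exact ⟨_, ⟨x, mem_closedBall_self (Real.rpow_nonneg hs₁.1 _), rfl⟩⟩
        · rintro d ⟨w, hw, rfl⟩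
          rw [dist_comm]
          exact mem_closedBall.mp hw
      have hz1' : s₁ ^ p⁻¹ < dist x z := by
        by_contra hcc
        push_neg at hcc
        exact hz1 (mem_closedBall.mpr (by rw [dist_comm]; exact hcc))
      have hb2 : dist x z ≤ sSup (dist x '' closedBall x (s₂ ^ p⁻¹)) := by
        apply le_csSup
        · refine ⟨s₂ ^ p⁻¹, ?_⟩
          rintro d ⟨w, hw, rfl⟩
          rw [dist_comm]
          exact mem_closedBall.mp hw
        · exact ⟨z, hz2, rfl⟩
      rw [hψ] at hb1
      linarith
    rintro B₁ ⟨s₁, hs₁, rfl⟩ B₂ ⟨s₂, hs₂, rfl⟩ hψ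
    rcases le_total (s₁ ^ p⁻¹) (s₂ ^ p⁻¹) with h | h
    · exact key s₁ hs₁ s₂ hs₂ h hψ
    · exact (key s₂ hs₂ s₁ hs₁ h hψ.symm).symm
  · -- the image is contained in the countable set of distances from x
    refine Set.Countable.mono ?_ (ult_countable_range x)
    rintro d ⟨B, hB, rfl⟩
    obtain ⟨s, hs, rfl⟩ := hB
    have hcpt : IsCompact (dist x '' closedBall x (s ^ p⁻¹)) :=
      (isCompact_closedBall x _).image (continuous_const.dist continuous_id)
    have hne : (dist x '' closedBall x (s ^ p⁻¹)).Nonempty :=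
      ⟨_, ⟨x, mem_closedBall_self (Real.rpow_nonneg hs.1 _), rfl⟩⟩
    obtain ⟨w, -, hweq⟩ := hcpt.sSup_mem hne
    exact ⟨w, hweq⟩

lemma sum_chain [ProperSpace X] {p : ℝ} (hp : 1 ≤ p) (x y : X) :
    ∑' B : chainSet p x y, wB p (B : Set X) = ENNReal.ofReal (dist x y ^ p) := by
  haveI := (chainSet_countable hp x y).to_subtype
  have hdisj : Pairwise (Function.onFun Disjoint fun B : chainSet p x y => Jset p (B : Set X)) := by
    rintro B₁ B₂ hne
    rw [Function.onFun, Set.disjoint_left]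
    intro s hs₁ hs₂
    have hx1 : x ∈ (B₁ : Set X) := (chainSet_mem hp B₁.2).1
    have hx2 : x ∈ (B₂ : Set X) := (chainSet_mem hp B₂.2).1
    exact hne (Subtype.ext ((Jset_recenter p hs₁ hx1).symm.trans (Jset_recenter p hs₂ hx2)))
  have hmeas : ∀ B : chainSet p x y, MeasurableSet (Jset p (B : Set X)) :=
    fun B => (Jset_ordConnected hp _).measurableSet
  have hunion : ⋃ B : chainSet p x y, Jset p (B : Set X) = Set.Ico 0 (dist x y ^ p) := by
    apply subset_antisymm
    · rintro s hs
      simp only [Set.mem_iUnion] at hs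
      obtain ⟨B, hsB⟩ := hs
      exact (mem_chainSet_of hp (chainSet_mem hp B.2).1 (chainSet_mem hp B.2).2 hsB).2
    · intro s hs
      refine Set.mem_iUnion.mpr ⟨⟨closedBall x (s ^ p⁻¹), ⟨s, hs, rfl⟩⟩, ?_⟩
      exact ⟨hs.1, x, mem_closedBall_self (Real.rpow_nonneg hs.1 _), rfl⟩
  calc ∑' B : chainSet p x y, wB p (B : Set X)
      = volume (⋃ B : chainSet p x y, Jset p (B : Set X)) := (measure_iUnion hdisj hmeas).symm
    _ = ENNReal.ofReal (dist x y ^ p) := by rw [hunion, Real.volume_Ico, sub_zero]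

open scoped Classical in
/-- One-sided separation term. -/
noncomputable def sTerm (p : ℝ) (x y : X) (B : Set X) : ℝ≥0∞ :=
  wB p B * (if x ∈ B ∧ y ∉ B then 1 else 0)

lemma sum_sTerm [ProperSpace X] {p : ℝ} (hp : 1 ≤ p) (x y : X) :
    ∑' B : Set X, sTerm p x y B = ENNReal.ofReal (dist x y ^ p) := by
  have hsupp : Function.support (sTerm p x y) ⊆ chainSet p x y := by
    intro B hB
    rw [Function.mem_support] at hB
    by_cases hcond : x ∈ B ∧ y ∉ B
    · have hw : wB p B ≠ 0 := by
        intro h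
        exact hB (by simp [sTerm, h])
      have hne : (Jset p B).Nonempty := by
        by_contra hc
        rw [Set.not_nonempty_iff_eq_empty] at hc
        exact hw (by simp [wB, hc])
      obtain ⟨s, hs⟩ := hne
      exact (mem_chainSet_of hp hcond.1 hcond.2 hs).1
    · exact absurd (by simp [sTerm, hcond]) hB
  rw [← tsum_subtype_eq_of_support_subset hsupp]
  have hcongr : ∀ B : chainSet p x y, sTerm p x y (B : Set X) = wB p (B : Set X) := by
    intro B
    have h := chainSet_mem hp B.2
    simp [sTerm, h.1, h.2]
  rw [tsum_congr hcongr, sum_chain hp x y]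

/-- Two-sided separation term. -/
noncomputable def xTerm (p : ℝ) (x y : X) (B : Set X) : ℝ≥0∞ :=
  sTerm p x y B + sTerm p y x B

lemma sum_xTerm [ProperSpace X] {p : ℝ} (hp : 1 ≤ p) (x y : X) :
    ∑' B : Set X, xTerm p x y B = 2 * ENNReal.ofReal (dist x y ^ p) := by
  rw [show (fun B : Set X => xTerm p x y B) = fun B => sTerm p x y B + sTerm p y x B from rfl,
    ENNReal.tsum_add, sum_sTerm hp x y, sum_sTerm hp y x, dist_comm y x, two_mul]

/-- The countable collection of balls carrying positive weight. -/
def Bcoll (p : ℝ) (X : Type*) [MetricSpace X] : Set (Set X) :=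
  {B : Set X | B ≠ Set.univ ∧ wB p B ≠ 0}

lemma xTerm_support {p : ℝ} (x y : X) :
    Function.support (xTerm p x y) ⊆ Bcoll p X := by
  intro B hB
  rw [Function.mem_support] at hB
  constructor
  · rintro rfl
    exact hB (by simp [xTerm, sTerm])
  · intro hw
    exact hB (by simp [xTerm, sTerm, hw])

lemma wB_lt_top {p : ℝ} (hp : 1 ≤ p) {B : Set X} (hBu : B ≠ Set.univ) : wB p B ≠ ∞ := by
  by_cases hne : (Jset p B).Nonempty
  · obtain ⟨s₀, hs₀⟩ := hne
    obtain ⟨y, hy⟩ : ∃ y, y ∉ B := by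
      by_contra hc
      push_neg at hc
      exact hBu (Set.eq_univ_of_forall hc)
    obtain ⟨-, z, hzB, -⟩ := hs₀
    have hsub : Jset p B ⊆ Set.Ico 0 (dist z y ^ p) :=
      fun s hs => (mem_chainSet_of hp hzB hy hs).2
    refine ne_of_lt (lt_of_le_of_lt (measure_mono hsub) ?_)
    rw [Real.volume_Ico]
    exact ENNReal.ofReal_lt_top
  · rw [Set.not_nonempty_iff_eq_empty] at hne
    simp [wB, hne]

lemma Bcoll_countable [ProperSpace X] {p : ℝ} (hp : 1 ≤ p) : (Bcoll p X).Countable := by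
  have hppos : (0 : ℝ) < p := lt_of_lt_of_le one_pos hp
  obtain ⟨Q, hQc, hQd⟩ := TopologicalSpace.exists_countable_dense X
  have hsub : Bcoll p X ⊆
      (fun qd : ℚ × X => closedBall qd.2 ((qd.1 : ℝ) ^ p⁻¹)) '' (Set.univ ×ˢ Q) := by
    rintro B ⟨hBu, hw⟩
    have h2 : ∃ a ∈ Jset p B, ∃ b ∈ Jset p B, a < b := by
      by_contra hc
      push_neg at hc
      have hsing : (Jset p B).Subsingleton := fun a ha b hb =>
        le_antisymm (hc b hb a ha) (hc a ha b hb)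
      exact hw (hsing.measure_zero volume)
    obtain ⟨a, ha, b, hb, hab⟩ := h2
    obtain ⟨q, hq1, hq2⟩ := exists_rat_btwn hab
    have hqJ : (q : ℝ) ∈ Jset p B :=
      (Jset_ordConnected hp B).out ha hb ⟨hq1.le, hq2.le⟩
    have hq0 : (0 : ℝ) < q := lt_of_le_of_lt ha.1 hq1
    have hrpos : 0 < (q : ℝ) ^ p⁻¹ := Real.rpow_pos_of_pos hq0 _
    obtain ⟨-, z, hzB, hz⟩ := hqJ
    obtain ⟨d, hdQ, hdb⟩ := hQd.exists_mem_open isOpen_ball ⟨z, mem_ball_self hrpos⟩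
    have hdB : d ∈ B := by
      rw [← hz]
      exact ball_subset_closedBall hdb
    have hqJ' : (q : ℝ) ∈ Jset p B :=
      (Jset_ordConnected hp B).out ha hb ⟨hq1.le, hq2.le⟩
    exact ⟨(q, d), ⟨Set.mem_univ _, hdQ⟩, Jset_recenter p hqJ' hdB⟩
  exact Set.Countable.mono hsub ((Set.countable_univ.prod hQc).image _)

end UltraLpEmbed


open ENNReal

/-- Every proper ultrametric space embeds isometrically into `ℓ_p` for `p ≥ 1`. -/
theorem proper_ultrametric_embeds_into_lp (p : ℝ) (hp : 1 ≤ p)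
    (X : Type*) [MetricSpace X] [IsUltrametricDist X] [ProperSpace X] :
    haveI : Fact ((1 : ℝ≥0∞) ≤ ENNReal.ofReal p) := ⟨ENNReal.one_le_ofReal.mpr hp⟩
    ∃ f : X → lp (fun _ : ℕ => ℝ) (ENNReal.ofReal p), Isometry f := by
  haveI : Fact ((1 : ℝ≥0∞) ≤ ENNReal.ofReal p) := ⟨ENNReal.one_le_ofReal.mpr hp⟩
  cases isEmpty_or_nonempty X with
  | inl h => exact ⟨fun x => isEmptyElim x, fun x => isEmptyElim x⟩
  | inr h =>
  obtain ⟨x₀⟩ := h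
  classical
  open UltraLpEmbed Function in
  have hppos : (0 : ℝ) < p := lt_of_lt_of_le one_pos hp
  have hptop : (ENNReal.ofReal p).toReal = p := ENNReal.toReal_ofReal hppos.le
  haveI := (Bcoll_countable (X := X) hp).to_subtype
  obtain ⟨e, he⟩ := exists_injective_nat (↥(Bcoll p X))
  set c : Bcoll p X → ℝ := fun B => ((wB p (B : Set X) / 2).toReal) ^ p⁻¹ with hc
  set gd : X → Bcoll p X → ℝ := fun x B =>
    c B * ((if x ∈ (B : Set X) then (1 : ℝ) else 0) -
      (if x₀ ∈ (B : Set X) then (1 : ℝ) else 0)) with hgd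
  set F : X → ℕ → ℝ := fun x => Function.extend e (gd x) 0 with hF
  set G : X → X → ℕ → ℝ≥0∞ := fun x y =>
    Function.extend e (fun B : Bcoll p X => xTerm p x y (B : Set X) / 2) 0 with hG
  have hcoord : ∀ x y : X, ∀ n, ‖F x n - F y n‖ ^ p = (G x y n).toReal := by
    intro x y n
    by_cases hn : ∃ B, e B = n
    · obtain ⟨B, rfl⟩ := hn
      simp only [hF, hG, he.extend_apply]
      have hc0 : 0 ≤ c B := Real.rpow_nonneg ENNReal.toReal_nonneg _
      have hcp : c B ^ p = (wB p (B : Set X) / 2).toReal :=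
        Real.rpow_inv_rpow ENNReal.toReal_nonneg hppos.ne'
      by_cases hxB : x ∈ (B : Set X) <;> by_cases hyB : y ∈ (B : Set X)
      · have h1 : gd x B - gd y B = 0 := by simp [hgd, hxB, hyB]
        rw [h1, norm_zero, Real.zero_rpow hppos.ne']
        simp [UltraLpEmbed.xTerm, UltraLpEmbed.sTerm, hxB, hyB]
      · have h1 : gd x B - gd y B = c B := by by_cases hx0 : x₀ ∈ (B : Set X) <;> simp [hgd, hxB, hyB, hx0]
        rw [h1, Real.norm_of_nonneg hc0, hcp]
        simp [UltraLpEmbed.xTerm, UltraLpEmbed.sTerm, hxB, hyB]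
      · have h1 : gd x B - gd y B = -c B := by by_cases hx0 : x₀ ∈ (B : Set X) <;> simp [hgd, hxB, hyB, hx0]
        rw [h1, norm_neg, Real.norm_of_nonneg hc0, hcp]
        simp [UltraLpEmbed.xTerm, UltraLpEmbed.sTerm, hxB, hyB]
      · have h1 : gd x B - gd y B = 0 := by simp [hgd, hxB, hyB]
        rw [h1, norm_zero, Real.zero_rpow hppos.ne']
        simp [UltraLpEmbed.xTerm, UltraLpEmbed.sTerm, hxB, hyB]
    · simp only [hF, hG]
      rw [Function.extend_apply' _ _ _ hn, Function.extend_apply' _ _ _ hn,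
        Function.extend_apply' _ _ _ hn]
      simp [Real.zero_rpow hppos.ne']
  have hGsum : ∀ x y : X, ∑' n, G x y n = ENNReal.ofReal (dist x y ^ p) := by
    intro x y
    have hrange : Function.support
        (Function.extend e (fun B : Bcoll p X => xTerm p x y (B : Set X) / 2) 0) ⊆
        Set.range e := by
      intro n hn
      rw [Function.mem_support] at hn
      by_contra hr
      rw [Function.extend_apply' _ _ _ (by simpa using hr)] at hn
      exact hn rfl
    have h1 := he.tsum_eq
      (f := Function.extend e (fun B : Bcoll p X => xTerm p x y (B : Set X) / 2) 0) hrange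
    simp only [he.extend_apply] at h1
    rw [hG, ← h1]
    have hsupp2 : Function.support (fun B : Set X => xTerm p x y B / 2) ⊆ Bcoll p X := by
      intro B hB
      rw [Function.mem_support] at hB
      refine xTerm_support x y ?_
      rw [Function.mem_support]
      intro h0
      exact hB (by rw [h0, ENNReal.zero_div])
    rw [tsum_subtype_eq_of_support_subset hsupp2]
    simp_rw [div_eq_mul_inv]
    rw [ENNReal.tsum_mul_right, sum_xTerm hp x y, mul_comm (2 : ℝ≥0∞), mul_assoc,
      ENNReal.mul_inv_cancel (by norm_num) (by norm_num), mul_one]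
  have hGne : ∀ x y : X, ∑' n, G x y n ≠ ∞ := fun x y => by
    rw [hGsum]; exact ENNReal.ofReal_ne_top
  have hFx0 : F x₀ = 0 := by
    funext n
    by_cases hn : ∃ B, e B = n
    · obtain ⟨B, rfl⟩ := hn
      simp [hF, he.extend_apply, hgd]
    · simp [hF, Function.extend_apply' _ _ _ hn]
  have hmem : ∀ x : X, Memℓp (F x) (ENNReal.ofReal p) := by
    intro x
    apply memℓp_gen
    rw [hptop]
    have h2 : (fun n => ‖F x n‖ ^ p) = fun n => (G x x₀ n).toReal := by
      funext n
      have h3 := hcoord x x₀ n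
      rwa [hFx0, Pi.zero_apply, sub_zero] at h3
    rw [h2]
    exact ENNReal.summable_toReal (hGne x x₀)
  set fL : X → lp (fun _ : ℕ => ℝ) (ENNReal.ofReal p) := fun x => ⟨F x, hmem x⟩ with hfL
  refine ⟨fL, Isometry.of_dist_eq fun x y => ?_⟩
  have h0 : 0 < (ENNReal.ofReal p).toReal := by rw [hptop]; exact hppos
  have hnormp : ‖fL x - fL y‖ ^ p = dist x y ^ p := by
    have hnr := lp.norm_rpow_eq_tsum h0 (fL x - fL y)
    rw [hptop] at hnr
    rw [hnr]
    have hcoe : ∀ n, (fL x - fL y : lp (fun _ : ℕ => ℝ) (ENNReal.ofReal p)) n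
        = F x n - F y n := by
      intro n
      rw [hfL]
      simp [lp.coeFn_sub]
      rfl
    calc ∑' n, ‖(fL x - fL y : lp (fun _ : ℕ => ℝ) (ENNReal.ofReal p)) n‖ ^ p
        = ∑' n, (G x y n).toReal := by
          refine tsum_congr fun n => ?_
          rw [hcoe n, hcoord x y n]
      _ = (∑' n, G x y n).toReal :=
          (ENNReal.tsum_toReal_eq fun n => ENNReal.ne_top_of_tsum_ne_top (hGne x y) n).symm
      _ = dist x y ^ p := by
          rw [hGsum x y, ENNReal.toReal_ofReal (Real.rpow_nonneg dist_nonneg _)]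
  rw [dist_eq_norm]
  calc ‖fL x - fL y‖ = (‖fL x - fL y‖ ^ p) ^ p⁻¹ :=
        (Real.rpow_rpow_inv (norm_nonneg _) hppos.ne').symm
    _ = (dist x y ^ p) ^ p⁻¹ := by rw [hnormp]
    _ = dist x y := Real.rpow_rpow_inv dist_nonneg hppos.ne'
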